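/- For Dirichlet characters χ, ψ and complex numbers u, v, s with Re(s) large enough that all series below converge absolutely (e.g. Re(s) > 1 + max(Re u,0) + max(Re v,0) + max(Re(u+v),0)), the Dirichlet series Σ_{n≥1} σ_u(n,χ) σ_v(n,ψ) n^{−s} equals ζ(s) L(s−u,χ) L(s−v,ψ) L(s−u−v,χψ) / L(2s−u−v,χψ). -/

import Mathlib

open Finset

/-- Twisted sum of divisors function. -/
noncomputable def sigmaChar {N : ℕ} (χ : DirichletCharacter ℂ N) (s : ℂ) (n : ℤ) : ℂ :=
  ∑ d ∈ n.natAbs.divisors, χ (d : ZMod N) * (d : ℂ) ^ s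

open Finset ArithmeticFunction Complex

lemma ramanujan_key (a b : ℂ) (k : ℕ) :
    ∑ j ∈ range (k / 2 + 1), ((∑ s ∈ range (k - 2 * j + 1), a ^ s) *
        ∑ t ∈ range (k - 2 * j + 1), b ^ t) * (a * b) ^ j
      = ∑ c ∈ range (k + 1),
          (∑ l ∈ range (c + 1), (∑ i ∈ range (l + 1), a ^ i) * b ^ (c - l)) * (a * b) ^ (k - c) := by
  have hL : ∀ j, ((∑ s ∈ range (k - 2 * j + 1), a ^ s) *
      ∑ t ∈ range (k - 2 * j + 1), b ^ t) * (a * b) ^ j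
      = ∑ s ∈ range (k - 2 * j + 1), ∑ t ∈ range (k - 2 * j + 1),
          a ^ (j + s) * b ^ (j + t) := by
    intro j
    rw [sum_mul_sum, sum_mul]
    refine Finset.sum_congr rfl fun s _ => ?_
    rw [sum_mul]
    refine Finset.sum_congr rfl fun t _ => ?_
    rw [mul_pow, pow_add, pow_add]; ring
  have hR : ∀ c, (∑ l ∈ range (c + 1), (∑ i ∈ range (l + 1), a ^ i) * b ^ (c - l)) *
      (a * b) ^ (k - c)
      = ∑ l ∈ range (c + 1), ∑ i ∈ range (l + 1), a ^ (i + (k - c)) * b ^ ((c - l) + (k - c)) := by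
    intro c
    rw [sum_mul]
    refine Finset.sum_congr rfl fun l _ => ?_
    rw [mul_assoc, sum_mul]
    refine Finset.sum_congr rfl fun i _ => ?_
    rw [mul_pow, pow_add, pow_add]; ring
  simp_rw [hL, hR]
  have eL : ∑ j ∈ range (k / 2 + 1), ∑ s ∈ range (k - 2 * j + 1),
        ∑ t ∈ range (k - 2 * j + 1), a ^ (j + s) * b ^ (j + t)
      = ∑ x ∈ (range (k / 2 + 1)).sigma
          (fun j => (range (k - 2 * j + 1)).sigma fun _ => range (k - 2 * j + 1)),
          a ^ (x.1 + x.2.1) * b ^ (x.1 + x.2.2) :=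
    calc ∑ j ∈ range (k / 2 + 1), ∑ s ∈ range (k - 2 * j + 1),
          ∑ t ∈ range (k - 2 * j + 1), a ^ (j + s) * b ^ (j + t)
        = ∑ j ∈ range (k / 2 + 1),
            ∑ p ∈ (range (k - 2 * j + 1)).sigma (fun _ => range (k - 2 * j + 1)),
              a ^ (j + p.1) * b ^ (j + p.2) :=
          Finset.sum_congr rfl fun j _ => Finset.sum_sigma' _ _ _
      _ = _ := Finset.sum_sigma' _ _ _
  have eR : ∑ c ∈ range (k + 1), ∑ l ∈ range (c + 1),
        ∑ i ∈ range (l + 1), a ^ (i + (k - c)) * b ^ ((c - l) + (k - c))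
      = ∑ y ∈ (range (k + 1)).sigma
          (fun c => (range (c + 1)).sigma fun l => range (l + 1)),
          a ^ (y.2.2 + (k - y.1)) * b ^ ((y.1 - y.2.1) + (k - y.1)) :=
    calc ∑ c ∈ range (k + 1), ∑ l ∈ range (c + 1),
          ∑ i ∈ range (l + 1), a ^ (i + (k - c)) * b ^ ((c - l) + (k - c))
        = ∑ c ∈ range (k + 1),
            ∑ p ∈ (range (c + 1)).sigma (fun l => range (l + 1)),
              a ^ (p.2 + (k - c)) * b ^ ((c - p.1) + (k - c)) :=
          Finset.sum_congr rfl fun c _ => Finset.sum_sigma' _ _ _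
      _ = _ := Finset.sum_sigma' _ _ _
  rw [eL, eR]
  refine Finset.sum_nbij'
    (fun x => ⟨k - min x.2.1 x.2.2, ⟨k - x.2.2 - x.1, x.2.1 + x.1 - min x.2.1 x.2.2⟩⟩)
    (fun y => ⟨min y.2.2 (y.1 - y.2.1),
      ⟨y.2.2 + (k - y.1) - min y.2.2 (y.1 - y.2.1),
       (y.1 - y.2.1) + (k - y.1) - min y.2.2 (y.1 - y.2.1)⟩⟩) ?_ ?_ ?_ ?_ ?_
  · rintro ⟨j, s, t⟩ hx
    simp only [Finset.mem_sigma, Finset.mem_range] at hx ⊢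
    omega
  · rintro ⟨c, l, i⟩ hy
    simp only [Finset.mem_sigma, Finset.mem_range] at hy ⊢
    omega
  · rintro ⟨j, s, t⟩ hx
    simp only [Finset.mem_sigma, Finset.mem_range] at hx
    have h1 : min (s + j - min s t) ((k - min s t) - (k - t - j)) = j := by omega
    have h2 : (s + j - min s t) + (k - (k - min s t)) - j = s := by omega
    have h3 : ((k - min s t) - (k - t - j)) + (k - (k - min s t)) - j = t := by omega
    simp only [h1, h2, h3]
  · rintro ⟨c, l, i⟩ hy
    simp only [Finset.mem_sigma, Finset.mem_range] at hy
    have h1 : k - min (i + (k - c) - min i (c - l)) ((c - l) + (k - c) - min i (c - l)) = c := by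
      omega
    have h2 : k - ((c - l) + (k - c) - min i (c - l)) - min i (c - l) = l := by omega
    have h3 : (i + (k - c) - min i (c - l)) + min i (c - l) - min (i + (k - c) - min i (c - l))
        ((c - l) + (k - c) - min i (c - l)) = i := by omega
    simp only [h1, h2, h3]
  · rintro ⟨j, s, t⟩ hx
    simp only [Finset.mem_sigma, Finset.mem_range] at hx
    have h1 : (s + j - min s t) + (k - (k - min s t)) = j + s := by omega
    have h2 : ((k - min s t) - (k - t - j)) + (k - (k - min s t)) = j + t := by omega
    show a ^ (j + s) * b ^ (j + t)
        = a ^ ((s + j - min s t) + (k - (k - min s t)))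
          * b ^ (((k - min s t) - (k - t - j)) + (k - (k - min s t)))
    rw [h1, h2]

variable {N : ℕ}

/-- Twisted power function as an arithmetic function. -/
noncomputable def twChar (χ : DirichletCharacter ℂ N) (u : ℂ) : ArithmeticFunction ℂ :=
  ⟨fun n => if n = 0 then 0 else χ (n : ZMod N) * (n : ℂ) ^ u, rfl⟩

lemma twChar_apply (χ : DirichletCharacter ℂ N) (u : ℂ) {n : ℕ} (hn : n ≠ 0) :
    twChar χ u n = χ (n : ZMod N) * (n : ℂ) ^ u := if_neg hn

lemma twChar_apply_mul (χ : DirichletCharacter ℂ N) (u : ℂ) {m n : ℕ} (hm : m ≠ 0) (hn : n ≠ 0) :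
    twChar χ u (m * n) = twChar χ u m * twChar χ u n := by
  rw [twChar_apply _ _ (mul_ne_zero hm hn), twChar_apply _ _ hm, twChar_apply _ _ hn,
    Nat.cast_mul, map_mul, Nat.cast_mul, Complex.natCast_mul_natCast_cpow]
  ring

lemma twChar_apply_one (χ : DirichletCharacter ℂ N) (u : ℂ) : twChar χ u 1 = 1 := by
  rw [twChar_apply _ _ one_ne_zero]
  simp

lemma twChar_isMultiplicative (χ : DirichletCharacter ℂ N) (u : ℂ) :
    (twChar χ u).IsMultiplicative :=
  ArithmeticFunction.IsMultiplicative.iff_ne_zero.mpr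
    ⟨twChar_apply_one χ u, fun hm hn _ => twChar_apply_mul χ u hm hn⟩

lemma twChar_apply_pow (χ : DirichletCharacter ℂ N) (u : ℂ) {p : ℕ} (hp : p ≠ 0) (k : ℕ) :
    twChar χ u (p ^ k) = (twChar χ u p) ^ k := by
  induction k with
  | zero => simpa using twChar_apply_one χ u
  | succ k ih => rw [pow_succ, twChar_apply_mul χ u (pow_ne_zero k hp) hp, ih, pow_succ]

lemma twChar_mul_apply (χ ψ : DirichletCharacter ℂ N) (u v : ℂ) {n : ℕ} (hn : n ≠ 0) :
    twChar (χ * ψ) (u + v) n = twChar χ u n * twChar ψ v n := by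
  rw [twChar_apply _ _ hn, twChar_apply _ _ hn, twChar_apply _ _ hn, MulChar.mul_apply,
    Complex.cpow_add _ _ (Nat.cast_ne_zero.mpr hn)]
  ring

/-- Lift an arithmetic function to squares. -/
noncomputable def sqLift (f : ArithmeticFunction ℂ) : ArithmeticFunction ℂ :=
  ⟨fun n => if Nat.sqrt n ^ 2 = n then f (Nat.sqrt n) else 0, by simp⟩

lemma sqrt_sq' (m : ℕ) : Nat.sqrt (m ^ 2) = m := by rw [sq, Nat.sqrt_eq]

lemma sqLift_apply_sq (f : ArithmeticFunction ℂ) (m : ℕ) : sqLift f (m ^ 2) = f m := by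
  simp [sqLift, sqrt_sq']

lemma sqLift_apply_of_not_sq {f : ArithmeticFunction ℂ} {n : ℕ} (h : ¬ Nat.sqrt n ^ 2 = n) :
    sqLift f n = 0 := if_neg h

lemma not_sq_imp {n : ℕ} (h : ¬ Nat.sqrt n ^ 2 = n) (m : ℕ) : m ^ 2 ≠ n := by
  rintro rfl
  exact h (by rw [sqrt_sq'])

lemma sq_nat_inj : Function.Injective (fun m : ℕ => m ^ 2) :=
  fun _ _ h => Nat.pow_left_injective two_ne_zero h

lemma sqLift_mul (f g : ArithmeticFunction ℂ) : sqLift f * sqLift g = sqLift (f * g) := by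
  ext n
  by_cases hn : Nat.sqrt n ^ 2 = n
  · obtain ⟨m, rfl⟩ : ∃ m, n = m ^ 2 := ⟨Nat.sqrt n, hn.symm⟩
    rw [sqLift_apply_sq, mul_apply, mul_apply]
    refine (Finset.sum_bij_ne_zero (fun y _ _ => (y.1 ^ 2, y.2 ^ 2)) ?_ ?_ ?_ ?_).symm
    · rintro ⟨y1, y2⟩ hy _
      rw [Nat.mem_divisorsAntidiagonal] at hy ⊢
      constructor
      · rw [← mul_pow, hy.1]
      · exact pow_ne_zero 2 hy.2
    · rintro ⟨y1, y2⟩ _ _ ⟨z1, z2⟩ _ _ h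
      simp only [Prod.mk.injEq] at h ⊢
      exact ⟨sq_nat_inj h.1, sq_nat_inj h.2⟩
    · rintro ⟨x1, x2⟩ hx hx0
      have h1 : Nat.sqrt x1 ^ 2 = x1 := by
        by_contra h
        rw [sqLift_apply_of_not_sq h, zero_mul] at hx0
        exact hx0 rfl
      have h2 : Nat.sqrt x2 ^ 2 = x2 := by
        by_contra h
        rw [sqLift_apply_of_not_sq h, mul_zero] at hx0
        exact hx0 rfl
      rw [Nat.mem_divisorsAntidiagonal] at hx
      refine ⟨(Nat.sqrt x1, Nat.sqrt x2), ?_, ?_, ?_⟩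
      · rw [Nat.mem_divisorsAntidiagonal]
        constructor
        · refine sq_nat_inj ?_
          simpa [mul_pow, h1, h2] using hx.1
        · rintro rfl
          exact hx.2 (by norm_num)
      · rw [← h1, ← h2] at hx0
        rwa [sqLift_apply_sq, sqLift_apply_sq] at hx0
      · simp [h1, h2]
    · rintro ⟨y1, y2⟩ _ _
      rw [sqLift_apply_sq, sqLift_apply_sq]
  · rw [sqLift_apply_of_not_sq hn, mul_apply]
    refine Finset.sum_eq_zero fun x hx => ?_
    by_cases h1 : Nat.sqrt x.1 ^ 2 = x.1
    · by_cases h2 : Nat.sqrt x.2 ^ 2 = x.2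
      · exfalso
        refine not_sq_imp hn (Nat.sqrt x.1 * Nat.sqrt x.2) ?_
        rw [mul_pow, h1, h2, (Nat.mem_divisorsAntidiagonal.mp hx).1]
      · rw [sqLift_apply_of_not_sq h2, mul_zero]
    · rw [sqLift_apply_of_not_sq h1, zero_mul]

lemma sqLift_isMultiplicative {f : ArithmeticFunction ℂ} (hf : f.IsMultiplicative) :
    (sqLift f).IsMultiplicative := by
  rw [ArithmeticFunction.IsMultiplicative.iff_ne_zero]
  constructor
  · have : (1 : ℕ) = 1 ^ 2 := by norm_num
    rw [this, sqLift_apply_sq, hf.1]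
  · intro m n hm hn hmn
    by_cases h : Nat.sqrt (m * n) ^ 2 = m * n
    · obtain ⟨c, hc⟩ : ∃ c, m = c ^ 2 :=
        exists_eq_pow_of_mul_eq_pow (Nat.isUnit_iff.mpr hmn) h.symm
      obtain ⟨d, hd⟩ : ∃ d, n = d ^ 2 :=
        exists_eq_pow_of_mul_eq_pow (Nat.isUnit_iff.mpr (Nat.coprime_comm.mp hmn))
          (by rw [mul_comm]; exact h.symm)
      subst hc hd
      have hcd : (c * d) ^ 2 = c ^ 2 * d ^ 2 := by ring
      rw [← hcd, sqLift_apply_sq, sqLift_apply_sq, sqLift_apply_sq]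
      refine hf.2 ?_
      have hc' : c ∣ c ^ 2 := dvd_pow_self c two_ne_zero
      have hd' : d ∣ d ^ 2 := dvd_pow_self d two_ne_zero
      exact Nat.Coprime.coprime_dvd_left hc' (Nat.Coprime.coprime_dvd_right hd' hmn)
    · rw [sqLift_apply_of_not_sq h]
      by_cases h1 : Nat.sqrt m ^ 2 = m
      · by_cases h2 : Nat.sqrt n ^ 2 = n
        · exfalso
          exact not_sq_imp h (Nat.sqrt m * Nat.sqrt n) (by rw [mul_pow, h1, h2])
        · rw [sqLift_apply_of_not_sq h2, mul_zero]
      · rw [sqLift_apply_of_not_sq h1, zero_mul]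

lemma sqLift_apply_prime_pow (f : ArithmeticFunction ℂ) {p : ℕ} (hp : p.Prime) (m : ℕ) :
    sqLift f (p ^ m) = if m % 2 = 0 then f (p ^ (m / 2)) else 0 := by
  rcases Nat.even_or_odd m with he | ho
  · have h2 : m % 2 = 0 := Nat.even_iff.mp he
    have : p ^ m = (p ^ (m / 2)) ^ 2 := by
      rw [← pow_mul]
      congr 1
      omega
    rw [this, sqLift_apply_sq, if_pos h2]
  · have h2 : ¬ m % 2 = 0 := by
      rw [Nat.odd_iff] at ho; omega
    rw [if_neg h2]
    refine sqLift_apply_of_not_sq ?_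
    intro hsq
    have hdvd : Nat.sqrt (p ^ m) ∣ p ^ m := by
      conv_rhs => rw [← hsq]
      exact dvd_pow_self _ two_ne_zero
    obtain ⟨j, hj, hc⟩ := (Nat.dvd_prime_pow hp).mp hdvd
    rw [hc, ← pow_mul] at hsq
    have := Nat.pow_right_injective hp.two_le hsq
    omega

lemma twChar_mul_moebius_pmul (χ : DirichletCharacter ℂ N) (u : ℂ) :
    twChar χ u * ((ArithmeticFunction.moebius : ArithmeticFunction ℤ) :
        ArithmeticFunction ℂ).pmul (twChar χ u) = 1 := by
  ext n
  rcases eq_or_ne n 0 with rfl | hn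
  · simp
  have key : ∀ x ∈ n.divisorsAntidiagonal,
      twChar χ u x.1 * (((ArithmeticFunction.moebius : ArithmeticFunction ℤ) :
        ArithmeticFunction ℂ).pmul (twChar χ u)) x.2
      = twChar χ u n * ((ArithmeticFunction.moebius x.2 : ℤ) : ℂ) := by
    intro x hx
    rw [Nat.mem_divisorsAntidiagonal] at hx
    have hx1 : x.1 ≠ 0 := by rintro h; exact hx.2 (by rw [← hx.1, h, zero_mul])
    have hx2 : x.2 ≠ 0 := by rintro h; exact hx.2 (by rw [← hx.1, h, mul_zero])
    rw [ArithmeticFunction.pmul_apply, ArithmeticFunction.intCoe_apply, ← hx.1,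
      twChar_apply_mul χ u hx1 hx2]
    ring
  rw [ArithmeticFunction.mul_apply, Finset.sum_congr rfl key, ← Finset.mul_sum]
  have hsum : ∑ x ∈ n.divisorsAntidiagonal, ((ArithmeticFunction.moebius x.2 : ℤ) : ℂ)
      = ∑ d ∈ n.divisors, ((ArithmeticFunction.moebius d : ℤ) : ℂ) := by
    rw [← Nat.sum_div_divisors n (fun d => ((ArithmeticFunction.moebius d : ℤ) : ℂ)),
      ← Nat.sum_divisorsAntidiagonal (fun _ e => ((ArithmeticFunction.moebius e : ℤ) : ℂ))]
  rw [hsum]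
  have hz : ∑ d ∈ n.divisors, ((ArithmeticFunction.moebius d : ℤ) : ℂ)
      = (1 : ArithmeticFunction ℂ) n := by
    rw [← ArithmeticFunction.coe_moebius_mul_coe_zeta (R := ℂ),
      ArithmeticFunction.coe_mul_zeta_apply]
    exact Finset.sum_congr rfl fun d _ => ArithmeticFunction.intCoe_apply.symm
  rw [hz]
  rcases eq_or_ne n 1 with rfl | h1
  · simp [twChar_apply_one]
  · simp [ArithmeticFunction.one_apply, h1]

noncomputable def zetaC : ArithmeticFunction ℂ :=
  ((ArithmeticFunction.zeta : ArithmeticFunction ℕ) : ArithmeticFunction ℂ)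

lemma zetaC_isMultiplicative : zetaC.IsMultiplicative :=
  ArithmeticFunction.isMultiplicative_zeta.natCast

lemma zetaC_apply_ne {n : ℕ} (hn : n ≠ 0) : zetaC n = 1 := by
  simp [zetaC, ArithmeticFunction.zeta_apply_ne hn]

lemma mul_apply_prime_pow (f g : ArithmeticFunction ℂ) {p : ℕ} (hp : p.Prime) (k : ℕ) :
    (f * g) (p ^ k) = ∑ i ∈ range (k + 1), f (p ^ i) * g (p ^ (k - i)) := by
  rw [ArithmeticFunction.mul_apply,
    Nat.sum_divisorsAntidiagonal (fun x y => f x * g y),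
    Nat.sum_divisors_prime_pow hp]
  refine Finset.sum_congr rfl fun i hi => ?_
  rw [Nat.pow_div (by simpa using Nat.lt_succ_iff.mp (Finset.mem_range.mp hi)) hp.pos]

lemma zetaC_mul_twChar_prime_pow (χ : DirichletCharacter ℂ N) (u : ℂ) {p : ℕ} (hp : p.Prime)
    (k : ℕ) : (zetaC * twChar χ u) (p ^ k) = ∑ t ∈ range (k + 1), (twChar χ u p) ^ t := by
  rw [mul_apply_prime_pow _ _ hp]
  have h : ∀ i ∈ range (k + 1), zetaC (p ^ i) * twChar χ u (p ^ (k - i))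
      = (twChar χ u p) ^ (k - i) := by
    intro i _
    rw [zetaC_apply_ne (pow_ne_zero _ hp.pos.ne'), one_mul, twChar_apply_pow χ u hp.pos.ne']
  rw [Finset.sum_congr rfl h]
  calc ∑ i ∈ range (k + 1), (twChar χ u p) ^ (k - i)
      = ∑ i ∈ range (k + 1), (twChar χ u p) ^ (k + 1 - 1 - i) := by simp
    _ = _ := Finset.sum_range_reflect _ _

lemma reindex_aux (C : ℕ → ℂ) (x : ℂ) (k : ℕ) :
    ∑ i ∈ range (k + 1), (if (k - i) % 2 = 0 then C i * x ^ ((k - i) / 2) else 0)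
      = ∑ j ∈ range (k / 2 + 1), C (k - 2 * j) * x ^ j := by
  rw [← Finset.sum_filter]
  refine Finset.sum_nbij' (fun i => (k - i) / 2) (fun j => k - 2 * j) ?_ ?_ ?_ ?_ ?_
  · intro i hi
    simp only [Finset.mem_filter, Finset.mem_range] at hi ⊢
    omega
  · intro j hj
    simp only [Finset.mem_filter, Finset.mem_range] at hj ⊢
    omega
  · intro i hi
    simp only [Finset.mem_filter, Finset.mem_range] at hi
    show k - 2 * ((k - i) / 2) = i
    omega
  · intro j hj
    simp only [Finset.mem_range] at hj
    show (k - (k - 2 * j)) / 2 = j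
    omega
  · intro i hi
    simp only [Finset.mem_filter, Finset.mem_range] at hi
    rw [show k - 2 * ((k - i) / 2) = i by omega]

lemma main_identity (χ ψ : DirichletCharacter ℂ N) (u v : ℂ) :
    ((zetaC * twChar χ u).pmul (zetaC * twChar ψ v)) * sqLift (twChar (χ * ψ) (u + v))
      = zetaC * twChar χ u * twChar ψ v * twChar (χ * ψ) (u + v) := by
  have hζ := zetaC_isMultiplicative
  have hχ := twChar_isMultiplicative χ u
  have hψ := twChar_isMultiplicative ψ v
  have hΧ := twChar_isMultiplicative (χ * ψ) (u + v)
  rw [ArithmeticFunction.IsMultiplicative.eq_iff_eq_on_prime_powers _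
    (((hζ.mul hχ).pmul (hζ.mul hψ)).mul (sqLift_isMultiplicative hΧ)) _
    (((hζ.mul hχ).mul hψ).mul hΧ)]
  intro p k hp
  have hp0 : p ≠ 0 := hp.pos.ne'
  have hab : twChar (χ * ψ) (u + v) p = twChar χ u p * twChar ψ v p :=
    twChar_mul_apply χ ψ u v hp0
  set a := twChar χ u p with ha
  set b := twChar ψ v p with hb
  -- left-hand side
  rw [mul_apply_prime_pow _ _ hp]
  have hL : ∀ i ∈ range (k + 1),
      ((zetaC * twChar χ u).pmul (zetaC * twChar ψ v)) (p ^ i) *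
        sqLift (twChar (χ * ψ) (u + v)) (p ^ (k - i))
      = (if (k - i) % 2 = 0 then
          ((∑ s ∈ range (i + 1), a ^ s) * ∑ t ∈ range (i + 1), b ^ t) * (a * b) ^ ((k - i) / 2)
         else 0) := by
    intro i _
    rw [ArithmeticFunction.pmul_apply, zetaC_mul_twChar_prime_pow χ u hp,
      zetaC_mul_twChar_prime_pow ψ v hp, sqLift_apply_prime_pow _ hp,
      twChar_apply_pow _ _ hp0, hab]
    split
    · ring
    · rw [mul_zero]
  rw [Finset.sum_congr rfl hL, reindex_aux, ramanujan_key a b k]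
  -- right-hand side
  rw [mul_apply_prime_pow _ _ hp]
  refine Finset.sum_congr rfl fun c _ => ?_
  rw [twChar_apply_pow _ _ hp0, hab, mul_apply_prime_pow _ _ hp]
  congr 1
  refine Finset.sum_congr rfl fun l _ => ?_
  rw [zetaC_mul_twChar_prime_pow χ u hp, twChar_apply_pow _ _ hp0, ← hb]

open LSeries

lemma sqLift_one : sqLift 1 = 1 := by
  ext n
  by_cases h : Nat.sqrt n ^ 2 = n
  · obtain ⟨m, rfl⟩ : ∃ m, n = m ^ 2 := ⟨Nat.sqrt n, h.symm⟩
    rw [sqLift_apply_sq, ArithmeticFunction.one_apply, ArithmeticFunction.one_apply]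
    have : m ^ 2 = 1 ↔ m = 1 := by rw [pow_eq_one_iff]; simp
    rcases eq_or_ne m 1 with rfl | hm
    · norm_num
    · rw [if_neg hm, if_neg (fun hh => hm (this.mp hh))]
  · rw [sqLift_apply_of_not_sq h, ArithmeticFunction.one_apply]
    have : n ≠ 1 := by
      rintro rfl
      exact h (by norm_num)
    simp [this]

lemma twChar_norm_le (χ : DirichletCharacter ℂ N) (u : ℂ) {n : ℕ} (hn : n ≠ 0) :
    ‖twChar χ u n‖ ≤ (n : ℝ) ^ u.re := by
  rw [twChar_apply χ u hn, norm_mul,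
    Complex.norm_natCast_cpow_of_pos (Nat.pos_of_ne_zero hn)]
  exact mul_le_of_le_one_left (Real.rpow_nonneg (Nat.cast_nonneg n) _) (χ.norm_le_one _)

lemma twChar_norm_le_max (χ : DirichletCharacter ℂ N) (u : ℂ) {n : ℕ} (hn : n ≠ 0) :
    ‖twChar χ u n‖ ≤ (n : ℝ) ^ max u.re 0 := by
  refine (twChar_norm_le χ u hn).trans ?_
  refine Real.rpow_le_rpow_of_exponent_le ?_ (le_max_left _ _)
  exact_mod_cast Nat.one_le_iff_ne_zero.mpr hn

lemma twChar_summable (χ : DirichletCharacter ℂ N) {u s : ℂ} (h : u.re + 1 < s.re) :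
    LSeriesSummable (⇑(twChar χ u)) s := by
  refine LSeriesSummable_of_le_const_mul_rpow (x := u.re + 1) h ⟨1, fun n hn => ?_⟩
  rw [one_mul, show u.re + 1 - 1 = u.re by ring]
  exact twChar_norm_le χ u hn

lemma sqLift_norm_le {f : ArithmeticFunction ℂ} {x : ℝ}
    (hf : ∀ m : ℕ, m ≠ 0 → ‖f m‖ ≤ (m : ℝ) ^ x) {n : ℕ} (hn : n ≠ 0) :
    ‖sqLift f n‖ ≤ (n : ℝ) ^ (x / 2) := by
  by_cases h : Nat.sqrt n ^ 2 = n
  · obtain ⟨m, rfl⟩ : ∃ m, n = m ^ 2 := ⟨Nat.sqrt n, h.symm⟩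
    have hm : m ≠ 0 := by rintro rfl; exact hn (by norm_num)
    rw [sqLift_apply_sq]
    refine (hf m hm).trans (le_of_eq ?_)
    rw [show ((m ^ 2 : ℕ) : ℝ) = (m : ℝ) ^ (2 : ℕ) by push_cast; ring,
      ← Real.rpow_natCast ((m : ℝ)) 2, ← Real.rpow_mul (Nat.cast_nonneg m)]
    congr 1
    ring
  · rw [sqLift_apply_of_not_sq h, norm_zero]
    positivity

lemma sqLift_summable {f : ArithmeticFunction ℂ} {x : ℝ}
    (hf : ∀ m : ℕ, m ≠ 0 → ‖f m‖ ≤ (m : ℝ) ^ x) {s : ℂ} (h : x / 2 + 1 < s.re) :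
    LSeriesSummable (⇑(sqLift f)) s := by
  refine LSeriesSummable_of_le_const_mul_rpow h ⟨1, fun n hn => ?_⟩
  rw [one_mul, show x / 2 + 1 - 1 = x / 2 by ring]
  exact sqLift_norm_le hf hn

lemma LSeries_twChar_eq [NeZero N] (χ : DirichletCharacter ℂ N) {s u : ℂ} (h : 1 < (s - u).re) :
    LSeries (⇑(twChar χ u)) s = DirichletCharacter.LFunction χ (s - u) := by
  rw [DirichletCharacter.LFunction_eq_LSeries χ h]
  unfold LSeries
  congr 1
  funext n
  rcases eq_or_ne n 0 with rfl | hn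
  · rw [LSeries.term_zero, LSeries.term_zero]
  have hn' : (n : ℂ) ≠ 0 := Nat.cast_ne_zero.mpr hn
  rw [LSeries.term_of_ne_zero hn, LSeries.term_of_ne_zero hn, twChar_apply χ u hn,
    Complex.cpow_sub _ _ hn', div_div_eq_mul_div]

lemma LSeries_zetaC_eq {s : ℂ} (hs : 1 < s.re) : LSeries (⇑zetaC) s = riemannZeta s := by
  have h : ⇑zetaC = fun n => ((ArithmeticFunction.zeta n : ℕ) : ℂ) :=
    funext fun n => ArithmeticFunction.natCoe_apply
  rw [h]
  exact LSeries_zeta_eq_riemannZeta hs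

lemma zetaC_summable {s : ℂ} (hs : 1 < s.re) : LSeriesSummable (⇑zetaC) s := by
  have h : ⇑zetaC = fun n => ((ArithmeticFunction.zeta n : ℕ) : ℂ) :=
    funext fun n => ArithmeticFunction.natCoe_apply
  rw [h]
  exact (LSeriesSummable_zeta_iff).mpr hs

lemma LSeries_sqLift_twChar [NeZero N] (Χ : DirichletCharacter ℂ N) {w s : ℂ} (h2 : 1 < (2 * s - w).re) :
    LSeries (⇑(sqLift (twChar Χ w))) s = DirichletCharacter.LFunction Χ (2 * s - w) := by
  rw [DirichletCharacter.LFunction_eq_LSeries Χ h2]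
  have hsupp : Function.support (term (⇑(sqLift (twChar Χ w))) s)
      ⊆ Set.range (fun m : ℕ => m ^ 2) := by
    intro n hn
    rcases eq_or_ne n 0 with rfl | hn0
    · simp [LSeries.term_zero] at hn
    by_cases h : Nat.sqrt n ^ 2 = n
    · exact ⟨Nat.sqrt n, h⟩
    · exfalso
      apply hn
      rw [LSeries.term_of_ne_zero hn0, sqLift_apply_of_not_sq h, zero_div]
  rw [LSeries, ← sq_nat_inj.tsum_eq hsupp]
  unfold LSeries
  congr 1
  funext m
  rcases eq_or_ne m 0 with rfl | hm
  · simp [LSeries.term_zero]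
  have hm' : (m : ℂ) ≠ 0 := Nat.cast_ne_zero.mpr hm
  rw [LSeries.term_of_ne_zero (pow_ne_zero 2 hm), LSeries.term_of_ne_zero hm,
    sqLift_apply_sq, twChar_apply _ _ hm]
  have e1 : ((m ^ 2 : ℕ) : ℂ) ^ s = (m : ℂ) ^ (2 * s) := by
    rw [show (2 : ℂ) * s = ((2 : ℕ) : ℂ) * s by norm_num, Complex.natCast_cpow_natCast_mul]
    norm_num
  rw [e1, Complex.cpow_sub _ _ hm', div_div_eq_mul_div]

lemma zetaC_mul_twChar_eq_sigmaChar (χ : DirichletCharacter ℂ N) (u : ℂ) (n : ℕ) :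
    (zetaC * twChar χ u) n = sigmaChar χ u (n : ℤ) := by
  have : zetaC * twChar χ u = ↑ArithmeticFunction.zeta * twChar χ u := rfl
  rw [this, ArithmeticFunction.coe_zeta_mul_apply, sigmaChar, Int.natAbs_natCast]
  refine Finset.sum_congr rfl fun d hd => ?_
  exact twChar_apply χ u (Nat.pos_of_mem_divisors hd).ne'

lemma moebius_pmul_norm_le (Χ : DirichletCharacter ℂ N) (w : ℂ) {m : ℕ} (hm : m ≠ 0) :
    ‖(((ArithmeticFunction.moebius : ArithmeticFunction ℤ) :
        ArithmeticFunction ℂ).pmul (twChar Χ w)) m‖ ≤ (m : ℝ) ^ max w.re 0 := by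
  rw [ArithmeticFunction.pmul_apply, norm_mul, ArithmeticFunction.intCoe_apply]
  have h1 : ‖((ArithmeticFunction.moebius m : ℤ) : ℂ)‖ ≤ 1 := by
    have := ArithmeticFunction.abs_moebius_le_one (n := m)
    calc ‖((ArithmeticFunction.moebius m : ℤ) : ℂ)‖
        = |((ArithmeticFunction.moebius m : ℤ) : ℝ)| := by
          rw [← Complex.ofReal_intCast, Complex.norm_real, Real.norm_eq_abs]
      _ ≤ 1 := by
          rw [← Int.cast_abs]
          exact_mod_cast this
  calc ‖((ArithmeticFunction.moebius m : ℤ) : ℂ)‖ * ‖twChar Χ w m‖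
      ≤ 1 * ((m : ℝ) ^ max w.re 0) := by
        refine mul_le_mul h1 (twChar_norm_le_max Χ w hm) (norm_nonneg _) zero_le_one
    _ = (m : ℝ) ^ max w.re 0 := one_mul _

/-- Character-twisted Ramanujan identity. -/
theorem ramanujan_identity {N : ℕ} [NeZero N] (χ ψ : DirichletCharacter ℂ N) (u v s : ℂ)
    (hs : 1 + max u.re 0 + max v.re 0 + max (u + v).re 0 < s.re) :
    ∑' n : ℕ, sigmaChar χ u ((n : ℤ) + 1) * sigmaChar ψ v ((n : ℤ) + 1) / ((n : ℂ) + 1) ^ s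
      = riemannZeta s * DirichletCharacter.LFunction χ (s - u)
          * DirichletCharacter.LFunction ψ (s - v)
          * DirichletCharacter.LFunction (χ * ψ) (s - u - v)
          / DirichletCharacter.LFunction (χ * ψ) (2 * s - u - v) := by
  have hmu := le_max_left u.re 0
  have hmu0 := le_max_right u.re 0
  have hmv := le_max_left v.re 0
  have hmv0 := le_max_right v.re 0
  have hmw := le_max_left (u + v).re 0
  have hmw0 := le_max_right (u + v).re 0
  have haddre : (u + v).re = u.re + v.re := Complex.add_re u v
  have hs1 : 1 < s.re := by linarith
  have hsu : u.re + 1 < s.re := by linarith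
  have hsv : v.re + 1 < s.re := by linarith
  have hsw : (u + v).re + 1 < s.re := by linarith
  have hsu' : 1 < (s - u).re := by rw [Complex.sub_re]; linarith
  have hsv' : 1 < (s - v).re := by rw [Complex.sub_re]; linarith
  have hsw' : 1 < (s - (u + v)).re := by rw [Complex.sub_re]; linarith
  have h2sre : (2 * s).re = 2 * s.re := by simp [Complex.mul_re]
  have h2s : 1 < (2 * s - (u + v)).re := by
    rw [Complex.sub_re, h2sre]; linarith
  have hdivb : max (u + v).re 0 / 2 + 1 < s.re := by linarith
  -- summability
  have hSζ := zetaC_summable hs1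
  have hSχ := twChar_summable χ hsu
  have hSψ := twChar_summable ψ hsv
  have hSw := twChar_summable (χ * ψ) hsw
  have hSh : LSeriesSummable (⇑(sqLift (twChar (χ * ψ) (u + v)))) s :=
    sqLift_summable (fun m hm => twChar_norm_le_max (χ * ψ) (u + v) hm) hdivb
  have hSh' : LSeriesSummable (⇑(sqLift
      (((ArithmeticFunction.moebius : ArithmeticFunction ℤ) :
        ArithmeticFunction ℂ).pmul (twChar (χ * ψ) (u + v))))) s :=
    sqLift_summable (fun m hm => moebius_pmul_norm_le (χ * ψ) (u + v) hm) hdivb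
  have hSG : LSeriesSummable
      (⇑(zetaC * twChar χ u * twChar ψ v * twChar (χ * ψ) (u + v))) s :=
    ArithmeticFunction.LSeriesSummable_mul (ArithmeticFunction.LSeriesSummable_mul
      (ArithmeticFunction.LSeriesSummable_mul hSζ hSχ) hSψ) hSw
  -- the arithmetic identity
  have hid := main_identity χ ψ u v
  have hinv : sqLift (twChar (χ * ψ) (u + v)) * sqLift
      (((ArithmeticFunction.moebius : ArithmeticFunction ℤ) :
        ArithmeticFunction ℂ).pmul (twChar (χ * ψ) (u + v))) = 1 := by
    rw [sqLift_mul, twChar_mul_moebius_pmul, sqLift_one]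
  have hFeq : (zetaC * twChar χ u).pmul (zetaC * twChar ψ v)
      = zetaC * twChar χ u * twChar ψ v * twChar (χ * ψ) (u + v) * sqLift
        (((ArithmeticFunction.moebius : ArithmeticFunction ℤ) :
          ArithmeticFunction ℂ).pmul (twChar (χ * ψ) (u + v))) := by
    calc (zetaC * twChar χ u).pmul (zetaC * twChar ψ v)
        = (zetaC * twChar χ u).pmul (zetaC * twChar ψ v) *
            (sqLift (twChar (χ * ψ) (u + v)) * sqLift
              (((ArithmeticFunction.moebius : ArithmeticFunction ℤ) :
                ArithmeticFunction ℂ).pmul (twChar (χ * ψ) (u + v)))) := by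
          rw [hinv, mul_one]
      _ = ((zetaC * twChar χ u).pmul (zetaC * twChar ψ v) *
            sqLift (twChar (χ * ψ) (u + v))) * sqLift
              (((ArithmeticFunction.moebius : ArithmeticFunction ℤ) :
                ArithmeticFunction ℂ).pmul (twChar (χ * ψ) (u + v))) := (mul_assoc _ _ _).symm
      _ = _ := by rw [hid]
  have hSF : LSeriesSummable (⇑((zetaC * twChar χ u).pmul (zetaC * twChar ψ v))) s := by
    rw [hFeq]
    exact ArithmeticFunction.LSeriesSummable_mul hSG hSh'
  -- L-series values
  have hLG : LSeries (⇑(zetaC * twChar χ u * twChar ψ v * twChar (χ * ψ) (u + v))) s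
      = riemannZeta s * DirichletCharacter.LFunction χ (s - u)
        * DirichletCharacter.LFunction ψ (s - v)
        * DirichletCharacter.LFunction (χ * ψ) (s - u - v) := by
    rw [ArithmeticFunction.LSeries_mul' (ArithmeticFunction.LSeriesSummable_mul
        (ArithmeticFunction.LSeriesSummable_mul hSζ hSχ) hSψ) hSw,
      ArithmeticFunction.LSeries_mul' (ArithmeticFunction.LSeriesSummable_mul hSζ hSχ) hSψ,
      ArithmeticFunction.LSeries_mul' hSζ hSχ,
      LSeries_zetaC_eq hs1, LSeries_twChar_eq χ hsu', LSeries_twChar_eq ψ hsv',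
      LSeries_twChar_eq (χ * ψ) hsw', show s - (u + v) = s - u - v from by ring]
  have hLh : LSeries (⇑(sqLift (twChar (χ * ψ) (u + v)))) s
      = DirichletCharacter.LFunction (χ * ψ) (2 * s - u - v) := by
    rw [LSeries_sqLift_twChar (χ * ψ) h2s, show 2 * s - (u + v) = 2 * s - u - v from by ring]
  have h2s' : 1 < (2 * s - u - v).re := by
    rw [show 2 * s - u - v = 2 * s - (u + v) from by ring]; exact h2s
  have hne : DirichletCharacter.LFunction (χ * ψ) (2 * s - u - v) ≠ 0 := by
    rw [DirichletCharacter.LFunction_eq_LSeries (χ * ψ) h2s']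
    exact DirichletCharacter.LSeries_ne_zero_of_one_lt_re (χ * ψ) h2s'
  have hLHS : ∑' n : ℕ, sigmaChar χ u ((n : ℤ) + 1) * sigmaChar ψ v ((n : ℤ) + 1)
        / ((n : ℂ) + 1) ^ s
      = LSeries (⇑((zetaC * twChar χ u).pmul (zetaC * twChar ψ v))) s := by
    rw [LSeries, Summable.tsum_eq_zero_add hSF, LSeries.term_zero, zero_add]
    refine tsum_congr fun n => ?_
    rw [LSeries.term_of_ne_zero (Nat.succ_ne_zero n), ArithmeticFunction.pmul_apply,
      zetaC_mul_twChar_eq_sigmaChar χ u (n + 1), zetaC_mul_twChar_eq_sigmaChar ψ v (n + 1)]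
    push_cast
    rfl
  rw [hLHS, eq_div_iff hne, ← hLh, ← ArithmeticFunction.LSeries_mul' hSF hSh, hid, hLG]
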